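/- There exists a weighted triangle on which the function π fails the triangle inequality: for the complete graph on three vertices u, v, w with edge weights w(uv) = 1/4, w(vw) = 1/4, w(uw) = 3/4, one has π(u,w) = 3/7 > 2/5 = π(u,v) + π(v,w), where π(x,y) = p/(p+1) with p the minimum product weight over shortest paths between x and y (single edges here). -/

import Mathlib

open Classical

/-- Product weight of a walk: the product of the weights of its edges. -/
def walkProdWeight {V : Type*} {G : SimpleGraph V} (w : Sym2 V → ℝ)
    {u v : V} (γ : G.Walk u v) : ℝ :=
  (γ.edges.map w).prod

/-- The proximity function π. -/
noncomputable def piFun {V : Type*} (G : SimpleGraph V) (w : Sym2 V → ℝ)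
    (u v : V) : ℝ :=
  if u = v then 0
  else sInf {t | ∃ γ : G.Walk u v, γ.IsPath ∧ γ.length = G.dist u v ∧
    t = walkProdWeight w γ / (walkProdWeight w γ + 1)}

/-- The edge weights of the triangle: w(uv) = 1/4, w(vw) = 1/4, w(uw) = 3/4,
where u = 0, v = 1, w = 2. -/
noncomputable def triWeight : Sym2 (Fin 3) → ℝ := fun e =>
  if e = s(0, 1) then 1/4 else if e = s(1, 2) then 1/4
  else if e = s(0, 2) then 3/4 else 0

lemma edges_of_length_one {V : Type*} {G : SimpleGraph V} {u v : V}
    (γ : G.Walk u v) (h : γ.length = 1) : γ.edges = [s(u, v)] := by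
  cases γ with
  | nil => simp at h
  | cons hadj p =>
    simp only [SimpleGraph.Walk.length_cons, Nat.add_eq_right] at h
    have := SimpleGraph.Walk.eq_of_length_eq_zero h
    subst this
    have : p.edges = [] := by
      rw [SimpleGraph.Walk.nil_iff_eq_nil.mp (SimpleGraph.Walk.length_eq_zero_iff.mp h)]; rfl
    simp [SimpleGraph.Walk.edges_cons, this]

lemma piFun_adj {V : Type*} {G : SimpleGraph V} (w : Sym2 V → ℝ) {u v : V}
    (hne : u ≠ v) (hadj : G.Adj u v) :
    piFun G w u v = w s(u, v) / (w s(u, v) + 1) := by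
  have hd : G.dist u v = 1 := SimpleGraph.dist_eq_one_iff_adj.mpr hadj
  have hset : {t | ∃ γ : G.Walk u v, γ.IsPath ∧ γ.length = G.dist u v ∧
      t = walkProdWeight w γ / (walkProdWeight w γ + 1)} =
      {w s(u, v) / (w s(u, v) + 1)} := by
    ext t
    simp only [Set.mem_setOf_eq, Set.mem_singleton_iff, hd]
    constructor
    · rintro ⟨γ, _, hlen, rfl⟩
      rw [walkProdWeight, edges_of_length_one γ hlen]
      simp
    · rintro rfl
      refine ⟨SimpleGraph.Walk.cons hadj SimpleGraph.Walk.nil, ?_, rfl, ?_⟩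
      · simp [hne]
      · rw [walkProdWeight, edges_of_length_one _ (by simp)]; simp
  rw [piFun, if_neg hne, hset, csInf_singleton]

theorem pi_fails_triangle_inequality :
    piFun (⊤ : SimpleGraph (Fin 3)) triWeight 0 2 = 3/7 ∧
    piFun (⊤ : SimpleGraph (Fin 3)) triWeight 0 1 +
      piFun (⊤ : SimpleGraph (Fin 3)) triWeight 1 2 = 2/5 ∧
    piFun (⊤ : SimpleGraph (Fin 3)) triWeight 0 1 +
        piFun (⊤ : SimpleGraph (Fin 3)) triWeight 1 2 <
      piFun (⊤ : SimpleGraph (Fin 3)) triWeight 0 2 := by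
  have h02 : piFun (⊤ : SimpleGraph (Fin 3)) triWeight 0 2 = 3/7 := by
    rw [piFun_adj triWeight (by decide) (by simp)]
    norm_num [triWeight, Sym2.eq, Sym2.rel_iff', Prod.ext_iff, (by decide : (2:Fin 3) ≠ 1), (by decide : (0:Fin 3) = 2 → False)]
  have h01 : piFun (⊤ : SimpleGraph (Fin 3)) triWeight 0 1 = 1/5 := by
    rw [piFun_adj triWeight (by decide) (by simp)]
    norm_num [triWeight]
  have h12 : piFun (⊤ : SimpleGraph (Fin 3)) triWeight 1 2 = 1/5 := by
    rw [piFun_adj triWeight (by decide) (by simp)]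
    norm_num [triWeight, Sym2.eq, Sym2.rel_iff', Prod.ext_iff, (by decide : (2:Fin 3) ≠ 1), (by decide : (0:Fin 3) = 2 → False)]
  refine ⟨h02, ?_, ?_⟩
  · rw [h01, h12]; norm_num
  · rw [h01, h12, h02]; norm_num
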